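/- Let p be a positive integer and let a_1, …, a_p be complex numbers each having positive real part. Then the function x ↦ e^{-(a_1 x_1 + ⋯ + a_p x_p)} is Lebesgue-integrable on the open cone C_p = {(x_1,…,x_p) ∈ ℝ^p : x_1 > x_2 > ⋯ > x_p > 0}, and ∫_{C_p} e^{-(a_1 x_1 + ⋯ + a_p x_p)} dx_1 ⋯ dx_p = f_p(a_1,…,a_p). -/

import Mathlib

open MeasureTheory Finset

/-- `f_p(a_1, …, a_p) = ∏_{k=1}^p (a_1 + ⋯ + a_k)⁻¹`. -/
noncomputable def partialFracProd {n : ℕ} (a : Fin n → ℂ) : ℂ :=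
  ∏ k : Fin n, (∑ j ∈ Finset.Iic k, a j)⁻¹

/-- The open cone `C_p = {x ∈ ℝ^p : x_1 > x_2 > ⋯ > x_p > 0}`. -/
def cone (p : ℕ) : Set (Fin p → ℝ) :=
  {x | (∀ i j : Fin p, i < j → x j < x i) ∧ ∀ i, 0 < x i}

private lemma norm_cexp_neg_mul (b : ℂ) (t : ℝ) :
    ‖Complex.exp (-(b * t))‖ = Real.exp (-(b.re * t)) := by
  rw [Complex.norm_exp]
  congr 1
  simp [Complex.mul_re]

private lemma integrableOn_cexp_Ioi {b : ℂ} (hb : 0 < b.re) :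
    IntegrableOn (fun t : ℝ => Complex.exp (-(b * t))) (Set.Ioi 0) := by
  have hcont : Continuous fun t : ℝ => Complex.exp (-(b * t)) := by
    fun_prop
  refine Integrable.mono' (g := fun t : ℝ => Real.exp (-b.re * t))
    (exp_neg_integrableOn_Ioi 0 hb) hcont.aestronglyMeasurable.restrict ?_
  filter_upwards with t
  rw [norm_cexp_neg_mul, neg_mul]

private lemma integral_cexp_Ioi {b : ℂ} (hb : 0 < b.re) :
    ∫ t : ℝ in Set.Ioi 0, Complex.exp (-(b * t)) = b⁻¹ := by
  have hb0 : b ≠ 0 := by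
    intro h; rw [h] at hb; simp at hb
  have hderiv : ∀ t ∈ Set.Ici (0 : ℝ),
      HasDerivAt (fun t : ℝ => -b⁻¹ * Complex.exp (-(b * t)))
        (Complex.exp (-(b * t))) t := by
    intro t _
    have h1 : HasDerivAt (fun t : ℝ => -(b * t)) (-b) t := by
      simpa using ((Complex.ofRealCLM.hasDerivAt (x := t)).const_mul b).fun_neg
    have h2 := h1.cexp.const_mul (-b⁻¹)
    refine h2.congr_deriv ?_
    rw [mul_comm (Complex.exp _) (-b), ← mul_assoc, neg_mul_neg, inv_mul_cancel₀ hb0, one_mul]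
  have htend : Filter.Tendsto (fun t : ℝ => -b⁻¹ * Complex.exp (-(b * t)))
      Filter.atTop (nhds 0) := by
    rw [tendsto_zero_iff_norm_tendsto_zero]
    have heq : (fun t : ℝ => ‖-b⁻¹ * Complex.exp (-(b * t))‖)
        = fun t : ℝ => ‖b⁻¹‖ * Real.exp (-(b.re * t)) := by
      funext t
      rw [norm_mul, norm_neg, norm_cexp_neg_mul]
    rw [heq]
    have h3 : Filter.Tendsto (fun t : ℝ => -(b.re * t)) Filter.atTop Filter.atBot := by
      exact Filter.tendsto_neg_atTop_atBot.comp
        (Filter.Tendsto.const_mul_atTop hb Filter.tendsto_id)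
    have h4 := (Real.tendsto_exp_atBot.comp h3).const_mul ‖b⁻¹‖
    simpa using h4
  have := MeasureTheory.integral_Ioi_of_hasDerivAt_of_tendsto' hderiv
    (integrableOn_cexp_Ioi hb) htend
  rw [this]
  simp

private lemma sum_Ici_comm {p : ℕ} (g : Fin p → Fin p → ℂ) :
    ∑ i, ∑ k ∈ Finset.Ici i, g i k = ∑ k, ∑ i ∈ Finset.Iic k, g i k := by
  have hIci : ∀ i : Fin p, Finset.Ici i = Finset.univ.filter (fun k => i ≤ k) := by
    intro i; ext k; simp
  have hIic : ∀ k : Fin p, Finset.Iic k = Finset.univ.filter (fun i => i ≤ k) := by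
    intro k; ext i; simp
  simp_rw [hIci, Finset.sum_filter]
  rw [Finset.sum_comm]
  simp_rw [hIic, Finset.sum_filter]

theorem integral_exp_over_cone
    (p : ℕ) (hp : 0 < p) (a : Fin p → ℂ) (ha : ∀ i, 0 < (a i).re) :
    IntegrableOn
      (fun x : Fin p → ℝ => Complex.exp (-(∑ i, a i * (x i : ℂ)))) (cone p)
      volume ∧
    ∫ x in cone p, Complex.exp (-(∑ i, a i * (x i : ℂ))) =
      partialFracProd a := by
  classical
  set b : Fin p → ℂ := fun k => ∑ j ∈ Finset.Iic k, a j with hb_def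
  have hb : ∀ k, 0 < (b k).re := by
    intro k
    rw [hb_def]
    simp only [Complex.re_sum]
    exact Finset.sum_pos (fun j _ => ha j) ⟨k, Finset.mem_Iic.mpr le_rfl⟩
  -- the triangular matrix of ones and the associated linear map
  set M : Matrix (Fin p) (Fin p) ℝ := fun i k => if i ≤ k then 1 else 0 with hM
  have hdetM : M.det = 1 := by
    rw [Matrix.det_of_upperTriangular]
    · simp [hM]
    · intro i j hij
      simp only [hM]
      exact if_neg (not_le.mpr hij)
  set T : (Fin p → ℝ) →ₗ[ℝ] (Fin p → ℝ) := Matrix.toLin' M with hT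
  have hTdet : LinearMap.det T = 1 := by rw [hT, LinearMap.det_toLin', hdetM]
  have hTapp : ∀ (y : Fin p → ℝ) (i : Fin p), T y i = ∑ k ∈ Finset.Ici i, y k := by
    intro y i
    rw [hT, Matrix.toLin'_apply]
    simp only [Matrix.toLin'_apply, Matrix.mulVec, dotProduct, hM, ite_mul, one_mul,
      zero_mul]
    rw [Finset.sum_congr rfl (fun k _ => by
      rw [show (if i ≤ k then y k else 0) = (if k ∈ Finset.Ici i then y k else 0) by
        simp [Finset.mem_Ici]]), Finset.sum_ite_mem, Finset.univ_inter]
  have hT0 : LinearMap.det T ≠ 0 := by rw [hTdet]; exact one_ne_zero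
  have hmp : MeasurePreserving T (volume : Measure (Fin p → ℝ)) volume := by
    refine ⟨T.continuous_of_finiteDimensional.measurable, ?_⟩
    rw [Measure.map_linearMap_addHaar_eq_smul_addHaar volume hT0, hTdet]
    simp
  have hemb : MeasurableEmbedding (T : (Fin p → ℝ) → (Fin p → ℝ)) := by
    have hcoe : (T : (Fin p → ℝ) → (Fin p → ℝ))
        = (LinearMap.equivOfDetNeZero T hT0).toContinuousLinearEquiv.toHomeomorph := by
      funext y
      simp [LinearMap.equivOfDetNeZero]
    rw [hcoe]
    exact (LinearMap.equivOfDetNeZero T hT0).toContinuousLinearEquiv.toHomeomorph.measurableEmbedding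
  -- the preimage of the cone is the open positive orthant
  set Q : Set (Fin p → ℝ) := Set.univ.pi (fun _ => Set.Ioi (0 : ℝ)) with hQ
  have hQmeas : MeasurableSet Q :=
    MeasurableSet.univ_pi (fun _ => measurableSet_Ioi)
  have hpre : T ⁻¹' (cone p) = Q := by
    ext y
    simp only [Set.mem_preimage, hQ, Set.mem_pi, Set.mem_univ, forall_true_left, Set.mem_Ioi,
      cone, Set.mem_setOf_eq]
    constructor
    · rintro ⟨hmono, hpos⟩ k
      by_cases hk : (k : ℕ) + 1 < p
      · set k' : Fin p := ⟨(k : ℕ) + 1, hk⟩ with hk'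
        have hkk' : k < k' := by
          simp only [Fin.lt_def, hk']
          omega
        have hlt := hmono k k' hkk'
        have hsplit : Finset.Ici k = insert k (Finset.Ici k') := by
          ext j
          have := j.isLt
          simp only [Finset.mem_Ici, Finset.mem_insert, Fin.le_def, Fin.ext_iff, hk']
          omega
        have hknot : k ∉ Finset.Ici k' := by
          simp only [Finset.mem_Ici, Fin.le_def, hk']
          omega
        have hsub : T y k = y k + T y k' := by
          rw [hTapp, hTapp, hsplit, Finset.sum_insert hknot]
        rw [hsub] at hlt
        linarith
      · have hsingle : Finset.Ici k = {k} := by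
          ext j
          have := j.isLt
          simp only [Finset.mem_Ici, Finset.mem_singleton, Fin.le_def, Fin.ext_iff]
          omega
        have hk2 := hpos k
        rwa [hTapp, hsingle, Finset.sum_singleton] at hk2
    · intro hy
      refine ⟨?_, ?_⟩
      · intro i j hij
        rw [hTapp, hTapp]
        have hsubset : Finset.Ici j ⊆ Finset.Ici i := Finset.Ici_subset_Ici.mpr hij.le
        rw [← Finset.sum_sdiff hsubset]
        have hpos' : 0 < ∑ k ∈ Finset.Ici i \ Finset.Ici j, y k := by
          refine Finset.sum_pos' (fun k _ => (hy k).le) ⟨i, ?_, hy i⟩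
          simp only [Finset.mem_sdiff, Finset.mem_Ici]
          exact ⟨le_rfl, not_le.mpr hij⟩
        linarith
      · intro i
        rw [hTapp]
        exact Finset.sum_pos (fun k _ => hy k) ⟨i, Finset.mem_Ici.mpr le_rfl⟩
  -- rewrite of the exponent after the change of variables
  have hexp : ∀ y : Fin p → ℝ,
      (∑ i, a i * ((T y i : ℝ) : ℂ)) = ∑ k, b k * (y k : ℂ) := by
    intro y
    have hterm : ∀ i, a i * ((T y i : ℝ) : ℂ) = ∑ k ∈ Finset.Ici i, a i * (y k : ℂ) := by
      intro i
      rw [hTapp]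
      push_cast
      rw [Finset.mul_sum]
    simp_rw [hterm]
    rw [sum_Ici_comm]
    refine Finset.sum_congr rfl fun k _ => ?_
    rw [hb_def, ← Finset.sum_mul]
  -- the one dimensional factors
  set g : Fin p → ℝ → ℂ :=
    fun k => (Set.Ioi (0 : ℝ)).indicator (fun t => Complex.exp (-(b k * t))) with hg
  have hgint : ∀ k, Integrable (g k) := by
    intro k
    rw [hg]
    exact (integrable_indicator_iff measurableSet_Ioi).mpr (integrableOn_cexp_Ioi (hb k))
  -- product decomposition of the integrand on the orthant
  set G : (Fin p → ℝ) → ℂ := fun y => Complex.exp (-(∑ k, b k * (y k : ℂ))) with hG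
  have hGprod : ∀ y : Fin p → ℝ, G y = ∏ k, Complex.exp (-(b k * (y k : ℂ))) := by
    intro y
    show Complex.exp (-(∑ k, b k * ((y k : ℝ) : ℂ))) = _
    rw [← Complex.exp_sum, Finset.sum_neg_distrib]
  have hind : Q.indicator G = fun y => ∏ k, g k (y k) := by
    funext y
    by_cases hy : y ∈ Q
    · rw [Set.indicator_of_mem hy, hGprod]
      refine Finset.prod_congr rfl fun k _ => ?_
      rw [hg]
      exact (Set.indicator_of_mem (f := fun t : ℝ => Complex.exp (-(b k * t))) (hy k (Set.mem_univ k))).symm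
    · rw [Set.indicator_of_notMem hy]
      have : ∃ k, y k ∉ Set.Ioi (0 : ℝ) := by
        by_contra hcon
        push_neg at hcon
        exact hy fun k _ => hcon k
      obtain ⟨k, hk⟩ := this
      refine (Finset.prod_eq_zero (Finset.mem_univ k) ?_).symm
      rw [hg]
      exact Set.indicator_of_notMem hk _
  have hGQ : IntegrableOn G Q := by
    rw [← integrable_indicator_iff hQmeas, hind]
    exact Integrable.fintype_prod hgint
  have hGQint : ∫ y in Q, G y = partialFracProd a := by
    rw [← integral_indicator hQmeas, hind, integral_fintype_prod_volume_eq_prod g]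
    unfold partialFracProd
    refine Finset.prod_congr rfl fun k _ => ?_
    rw [hg]
    simp only
    rw [integral_indicator measurableSet_Ioi, integral_cexp_Ioi (hb k), hb_def]
  -- transfer through the change of variables
  have hcomp : (fun x : Fin p → ℝ => Complex.exp (-(∑ i, a i * (x i : ℂ)))) ∘ T = G := by
    funext y
    simp only [Function.comp_apply, hG, hexp y]
  constructor
  · rw [← hmp.integrableOn_comp_preimage hemb, hcomp, hpre]
    exact hGQ
  · rw [← hmp.setIntegral_preimage_emb hemb
      (fun x : Fin p → ℝ => Complex.exp (-(∑ i, a i * (x i : ℂ)))) (cone p), hpre]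
    calc ∫ y in Q, Complex.exp (-(∑ i, a i * ((T y i : ℝ) : ℂ)))
        = ∫ y in Q, G y := by
          refine setIntegral_congr_fun hQmeas fun y _ => ?_
          rw [hG]
          simp only
          rw [hexp y]
      _ = partialFracProd a := hGQint
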